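/- Let Ω be a locally compact Hausdorff space and Γ a nondegenerate Banach module over C₀(Ω). Suppose N is a map assigning to each s ∈ Γ a positive continuous linear functional N(s) on C₀(Ω) such that (i) ‖N(s)‖ = ‖s‖ for all s ∈ Γ; (ii) N(f•s)(g) = N(s)(|f|·g) for all f, g ∈ C₀(Ω) and s ∈ Γ; (iii) N(s₁+s₂)(f) ≤ N(s₁)(f) + N(s₂)(f) for all s₁, s₂ ∈ Γ and all real-valued f ∈ C₀(Ω) with f ≥ 0. Then N is uniquely determined: N(s)(f) = ‖f•s‖ for every s ∈ Γ and every real-valued f ∈ C₀(Ω) with f ≥ 0. -/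
import Mathlib


open scoped ZeroAtInfty

noncomputable section

variable {𝕜 : Type*} [RCLike 𝕜] {Ω : Type*} [TopologicalSpace Ω]

/-- A Banach module structure over `C₀(Ω, 𝕜)` on a `𝕜`-Banach space `Γ`. -/
structure C0Module (𝕜 : Type*) [RCLike 𝕜] (Ω : Type*) [TopologicalSpace Ω]
    (Γ : Type*) [NormedAddCommGroup Γ] [NormedSpace 𝕜 Γ] where
  smul : C₀(Ω, 𝕜) →L[𝕜] Γ →L[𝕜] Γ
  mul_smul : ∀ (f g : C₀(Ω, 𝕜)) (s : Γ), smul (f * g) s = smul f (smul g s)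
  norm_smul_le : ∀ (f : C₀(Ω, 𝕜)) (s : Γ), ‖smul f s‖ ≤ ‖f‖ * ‖s‖

variable {Γ : Type*} [NormedAddCommGroup Γ] [NormedSpace 𝕜 Γ]

/-- Nondegeneracy of a Banach module over `C₀(Ω, 𝕜)`. -/
def C0Module.Nondegenerate (M : C0Module 𝕜 Ω Γ) : Prop :=
  Dense (Submodule.span 𝕜 {x : Γ | ∃ (f : C₀(Ω, 𝕜)) (s : Γ), M.smul f s = x} : Set Γ)

/-- The inclusion `C₀(Ω, ℝ) ⊆ C₀(Ω, 𝕜)`. -/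
def ofRealC0 (𝕜 : Type*) [RCLike 𝕜] {Ω : Type*} [TopologicalSpace Ω] (f : C₀(Ω, ℝ)) :
    C₀(Ω, 𝕜) where
  toFun := fun x => (f x : 𝕜)
  continuous_toFun := RCLike.continuous_ofReal.comp f.continuous
  zero_at_infty' := by
    have h2 : Filter.Tendsto (fun r : ℝ => (r : 𝕜)) (nhds 0) (nhds 0) := by
      simpa using (RCLike.continuous_ofReal (K := 𝕜)).tendsto 0
    exact h2.comp f.zero_at_infty'

/-- The pointwise maximum of two functions in `C₀(Ω, ℝ)`. -/
def supC0 (f g : C₀(Ω, ℝ)) : C₀(Ω, ℝ) where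
  toFun := fun x => max (f x) (g x)
  continuous_toFun := f.continuous.max g.continuous
  zero_at_infty' := by simpa using f.zero_at_infty'.max g.zero_at_infty'

/-- The AM-identity: `‖(f₁ ⊔ f₂) • s‖ = max ‖f₁ • s‖ ‖f₂ • s‖` for nonnegative real-valued
`f₁, f₂ ∈ C₀(Ω, ℝ)`. -/
def C0Module.IsAM (M : C0Module 𝕜 Ω Γ) : Prop :=
  ∀ (f₁ f₂ : C₀(Ω, ℝ)), (∀ x, 0 ≤ f₁ x) → (∀ x, 0 ≤ f₂ x) → ∀ s : Γ,
    ‖M.smul (ofRealC0 𝕜 (supC0 f₁ f₂)) s‖ =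
      max ‖M.smul (ofRealC0 𝕜 f₁) s‖ ‖M.smul (ofRealC0 𝕜 f₂) s‖

/-- A `U₀(Ω)`-valued norm on a Banach module `Γ` over `C₀(Ω, 𝕜)`. -/
structure IsU0Norm (M : C0Module 𝕜 Ω Γ) (N : Γ → Ω → ℝ) : Prop where
  nonneg : ∀ (s : Γ) (x : Ω), 0 ≤ N s x
  upperSemicontinuous : ∀ s : Γ, UpperSemicontinuous (N s)
  zero_at_infty : ∀ s : Γ, ∀ ε > 0, ∃ K : Set Ω, IsCompact K ∧ ∀ x ∉ K, N s x ≤ ε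
  sup_eq_norm : ∀ s : Γ, (⨆ x : Ω, N s x) = ‖s‖
  smul_eq : ∀ (f : C₀(Ω, 𝕜)) (s : Γ) (x : Ω), N (M.smul f s) x = ‖f x‖ * N s x
  subadd : ∀ (s₁ s₂ : Γ) (x : Ω), N (s₁ + s₂) x ≤ N s₁ x + N s₂ x

/-- The canonical candidate for the `U₀(Ω)`-valued norm. -/
def normFormula (M : C0Module 𝕜 Ω Γ) (s : Γ) (x : Ω) : ℝ :=
  sInf {r : ℝ | ∃ f : C₀(Ω, ℝ), (∀ y, 0 ≤ f y) ∧ f x = 1 ∧ r = ‖M.smul (ofRealC0 𝕜 f) s‖}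


/-- The pointwise modulus `|f| : x ↦ |f x|` of `f ∈ C₀(Ω, 𝕜)`, regarded as a `𝕜`-valued
function in `C₀(Ω, 𝕜)`. -/
def absC0 (f : C₀(Ω, 𝕜)) : C₀(Ω, 𝕜) where
  toFun := fun x => (‖f x‖ : 𝕜)
  continuous_toFun := RCLike.continuous_ofReal.comp f.continuous.norm
  zero_at_infty' := by
    have h : Filter.Tendsto (fun x => ‖f x‖) (Filter.cocompact Ω) (nhds 0) := by
      simpa using f.zero_at_infty'.norm
    have h2 : Filter.Tendsto (fun r : ℝ => (r : 𝕜)) (nhds 0) (nhds 0) := by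
      simpa using (RCLike.continuous_ofReal (K := 𝕜)).tendsto 0
    exact h2.comp h

/-! ### Auxiliary lemmas -/

lemma ofRealC0_apply' (f : C₀(Ω, ℝ)) (x : Ω) : ofRealC0 𝕜 f x = (f x : 𝕜) := rfl

lemma ofRealC0_sub' (f g : C₀(Ω, ℝ)) :
    ofRealC0 𝕜 (f - g) = ofRealC0 𝕜 f - ofRealC0 𝕜 g := by
  ext x; simp [ofRealC0_apply']

lemma ofRealC0_smul' (r : ℝ) (f : C₀(Ω, ℝ)) :
    ofRealC0 𝕜 (r • f) = (r : 𝕜) • ofRealC0 𝕜 f := by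
  ext x; simp [ofRealC0_apply']

/-- The real part of a `𝕜`-valued `C₀` function. -/
def reC0 (g : C₀(Ω, 𝕜)) : C₀(Ω, ℝ) where
  toFun := fun x => RCLike.re (g x)
  continuous_toFun := RCLike.continuous_re.comp g.continuous
  zero_at_infty' := by
    have h2 : Filter.Tendsto (RCLike.re (K := 𝕜)) (nhds 0) (nhds 0) := by
      simpa using (RCLike.continuous_re (K := 𝕜)).tendsto 0
    exact h2.comp g.zero_at_infty'

/-- The imaginary part of a `𝕜`-valued `C₀` function. -/
def imC0 (g : C₀(Ω, 𝕜)) : C₀(Ω, ℝ) where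
  toFun := fun x => RCLike.im (g x)
  continuous_toFun := RCLike.continuous_im.comp g.continuous
  zero_at_infty' := by
    have h2 : Filter.Tendsto (RCLike.im (K := 𝕜)) (nhds 0) (nhds 0) := by
      simpa using (RCLike.continuous_im (K := 𝕜)).tendsto 0
    exact h2.comp g.zero_at_infty'

lemma reC0_apply (g : C₀(Ω, 𝕜)) (x : Ω) : reC0 g x = RCLike.re (g x) := rfl

lemma imC0_apply (g : C₀(Ω, 𝕜)) (x : Ω) : imC0 g x = RCLike.im (g x) := rfl

/-- Positive part. -/
def posC0' (f : C₀(Ω, ℝ)) : C₀(Ω, ℝ) := supC0 f 0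

/-- Negative part. -/
def negC0' (f : C₀(Ω, ℝ)) : C₀(Ω, ℝ) := supC0 (-f) 0

lemma posC0'_nonneg (f : C₀(Ω, ℝ)) : ∀ x, 0 ≤ posC0' f x := by
  intro x
  show 0 ≤ max (f x) ((0 : C₀(Ω, ℝ)) x)
  simp

lemma negC0'_nonneg (f : C₀(Ω, ℝ)) : ∀ x, 0 ≤ negC0' f x := by
  intro x
  show 0 ≤ max ((-f) x) ((0 : C₀(Ω, ℝ)) x)
  simp

lemma pos_sub_neg' (f : C₀(Ω, ℝ)) : posC0' f - negC0' f = f := by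
  ext x
  show max (f x) ((0 : C₀(Ω, ℝ)) x) - max ((-f) x) ((0 : C₀(Ω, ℝ)) x) = f x
  simp only [ZeroAtInftyContinuousMap.coe_zero, Pi.zero_apply,
    ZeroAtInftyContinuousMap.coe_neg, Pi.neg_apply]
  rcases le_total (f x) 0 with h | h
  · rw [max_eq_right h, max_eq_left (by linarith)]; ring
  · rw [max_eq_left h, max_eq_right (by linarith)]; ring

lemma normC0_apply_le (f : C₀(Ω, 𝕜)) (x : Ω) : ‖f x‖ ≤ ‖f‖ := by
  have := f.toBCF.norm_coe_le_norm x
  rwa [ZeroAtInftyContinuousMap.norm_toBCF_eq_norm] at this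

lemma normC0_le_of (f : C₀(Ω, 𝕜)) (C : ℝ) (hC : 0 ≤ C) (h : ∀ x, ‖f x‖ ≤ C) : ‖f‖ ≤ C := by
  rw [← ZeroAtInftyContinuousMap.norm_toBCF_eq_norm]
  exact (BoundedContinuousFunction.norm_le hC).mpr h

lemma scalar_decomp' (a : ℝ) (z : 𝕜) :
    (a : 𝕜) * z = ((a * RCLike.re z : ℝ) : 𝕜) + RCLike.I * ((a * RCLike.im z : ℝ) : 𝕜) := by
  conv_lhs => rw [← RCLike.re_add_im z]
  push_cast
  ring

/-- Uniqueness of the `C₀(Ω)'`-valued norm: any assignment `N` of positive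
continuous linear functionals with the norm, modulus and subadditivity properties is given by
`N(s)(f) = ‖f • s‖` for nonnegative real-valued `f`. -/
theorem dual_valued_norm_unique
    [LocallyCompactSpace Ω] [T2Space Ω] [CompleteSpace Γ]
    (M : C0Module 𝕜 Ω Γ) (hM : M.Nondegenerate)
    (N : Γ → (C₀(Ω, 𝕜) →L[𝕜] 𝕜))
    (hpos : ∀ (s : Γ) (f : C₀(Ω, ℝ)), (∀ x, 0 ≤ f x) →
      ∃ r : ℝ, 0 ≤ r ∧ N s (ofRealC0 𝕜 f) = (r : 𝕜))
    (hnorm : ∀ s : Γ, ‖N s‖ = ‖s‖)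
    (hmod : ∀ (f g : C₀(Ω, 𝕜)) (s : Γ), N (M.smul f s) g = N s (absC0 f * g))
    (hsub : ∀ (s₁ s₂ : Γ) (f : C₀(Ω, ℝ)), (∀ x, 0 ≤ f x) →
      RCLike.re (N (s₁ + s₂) (ofRealC0 𝕜 f)) ≤
        RCLike.re (N s₁ (ofRealC0 𝕜 f)) + RCLike.re (N s₂ (ofRealC0 𝕜 f))) :
    ∀ (s : Γ) (f : C₀(Ω, ℝ)), (∀ x, 0 ≤ f x) →
      N s (ofRealC0 𝕜 f) = (‖M.smul (ofRealC0 𝕜 f) s‖ : 𝕜) := by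
  intro s f hf
  set Ff : C₀(Ω, 𝕜) := ofRealC0 𝕜 f with hFf
  obtain ⟨r0, hr0, hψF⟩ := hpos s f hf
  have habs : absC0 Ff = Ff := by
    ext x
    show (‖(f x : 𝕜)‖ : 𝕜) = (f x : 𝕜)
    rw [RCLike.norm_ofReal, abs_of_nonneg (hf x)]
  -- `N s` is real-valued on real functions
  have him : ∀ g : C₀(Ω, ℝ), RCLike.im (N s (ofRealC0 𝕜 g)) = 0 := by
    intro g
    obtain ⟨r₁, _, h₁⟩ := hpos s (posC0' g) (posC0'_nonneg g)
    obtain ⟨r₂, _, h₂⟩ := hpos s (negC0' g) (negC0'_nonneg g)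
    have hg : g = posC0' g - negC0' g := (pos_sub_neg' g).symm
    rw [hg, ofRealC0_sub', map_sub, h₁, h₂]
    simp
  -- monotonicity of `re ∘ N s ∘ ofRealC0`
  have hmono : ∀ g₁ g₂ : C₀(Ω, ℝ), (∀ x, g₁ x ≤ g₂ x) →
      RCLike.re (N s (ofRealC0 𝕜 g₁)) ≤ RCLike.re (N s (ofRealC0 𝕜 g₂)) := by
    intro g₁ g₂ h
    obtain ⟨r, hr, heq⟩ := hpos s (g₂ - g₁)
      (fun x => by
        have := h x
        simp only [ZeroAtInftyContinuousMap.coe_sub, Pi.sub_apply]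
        linarith)
    have h2 := congrArg RCLike.re heq
    rw [ofRealC0_sub', map_sub, map_sub, RCLike.ofReal_re] at h2
    linarith
  have hre_nonneg : 0 ≤ RCLike.re (N s Ff) := by
    rw [hψF, RCLike.ofReal_re]; exact hr0
  -- key bound: `‖N s (Ff * g)‖ ≤ re (N s Ff) * ‖g‖`
  have hbound : ∀ g : C₀(Ω, 𝕜), ‖N s (Ff * g)‖ ≤ RCLike.re (N s Ff) * ‖g‖ := by
    intro g
    by_cases hc : N s (Ff * g) = 0
    · rw [hc, norm_zero]
      positivity
    · set c := N s (Ff * g) with hcdef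
      set u : 𝕜 := (‖c‖ : 𝕜) / c with hu
      have hnc : ‖c‖ ≠ 0 := norm_ne_zero_iff.mpr hc
      have huc : u * c = (‖c‖ : 𝕜) := by
        rw [hu, div_mul_eq_mul_div, mul_div_assoc, div_self hc, mul_one]
      set g' : C₀(Ω, 𝕜) := u • g with hg'
      have hnu : ‖u‖ = 1 := by
        rw [hu, norm_div, RCLike.norm_ofReal, abs_of_nonneg (norm_nonneg c), div_self hnc]
      have hng' : ∀ x, ‖g' x‖ ≤ ‖g‖ := by
        intro x
        have h1 : g' x = u * g x := rfl
        rw [h1, norm_mul, hnu, one_mul]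
        exact normC0_apply_le g x
      have h1 : Ff * g' = u • (Ff * g) := by
        rw [hg']; exact mul_smul_comm u Ff g
      have h2 : (‖c‖ : 𝕜) = N s (Ff * g') := by
        rw [h1, map_smul, smul_eq_mul, ← hcdef, huc]
      have h3 : Ff * g' = ofRealC0 𝕜 (f * reC0 g') + (RCLike.I : 𝕜) • ofRealC0 𝕜 (f * imC0 g') := by
        ext x
        show (Ff * g') x = (ofRealC0 𝕜 (f * reC0 g') + (RCLike.I : 𝕜) • ofRealC0 𝕜 (f * imC0 g')) x
        have e1 : (Ff * g') x = (f x : 𝕜) * g' x := by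
          simp [hFf, ofRealC0_apply']
        have e2 : ofRealC0 𝕜 (f * reC0 g') x = ((f x * RCLike.re (g' x) : ℝ) : 𝕜) := by
          rw [ofRealC0_apply']
          norm_cast
        have e3 : ofRealC0 𝕜 (f * imC0 g') x = ((f x * RCLike.im (g' x) : ℝ) : 𝕜) := by
          rw [ofRealC0_apply']
          norm_cast
        simp only [ZeroAtInftyContinuousMap.coe_add, Pi.add_apply,
          ZeroAtInftyContinuousMap.coe_smul, Pi.smul_apply, smul_eq_mul]
        rw [e1, e2, e3]
        exact scalar_decomp' (f x) (g' x)
      have h4 : RCLike.re (N s (Ff * g')) = RCLike.re (N s (ofRealC0 𝕜 (f * reC0 g'))) := by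
        rw [h3, map_add, map_smul, smul_eq_mul, map_add]
        have him2 := him (f * imC0 g')
        have : RCLike.re (RCLike.I * N s (ofRealC0 𝕜 (f * imC0 g'))) = 0 := by
          simp [RCLike.mul_re, him2]
        rw [this, add_zero]
      have h5 : RCLike.re (N s (ofRealC0 𝕜 (f * reC0 g'))) ≤
          RCLike.re (N s (ofRealC0 𝕜 (‖g‖ • f))) := by
        apply hmono
        intro x
        have e4 : (f * reC0 g') x = f x * RCLike.re (g' x) := by
          simp [reC0_apply]
        have e5 : (‖g‖ • f) x = ‖g‖ * f x := by simp
        rw [e4, e5]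
        calc f x * RCLike.re (g' x) ≤ f x * ‖g' x‖ :=
              mul_le_mul_of_nonneg_left (RCLike.re_le_norm _) (hf x)
          _ ≤ f x * ‖g‖ := mul_le_mul_of_nonneg_left (hng' x) (hf x)
          _ = ‖g‖ * f x := mul_comm _ _
      have h6 : RCLike.re (N s (ofRealC0 𝕜 (‖g‖ • f))) = ‖g‖ * RCLike.re (N s Ff) := by
        rw [ofRealC0_smul', map_smul, smul_eq_mul, ← hFf]
        simp [RCLike.mul_re]
      have h7 : ‖c‖ = RCLike.re (N s (Ff * g')) := by
        rw [← h2, RCLike.ofReal_re]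
      calc ‖N s (Ff * g)‖ = ‖c‖ := rfl
        _ = RCLike.re (N s (Ff * g')) := h7
        _ = RCLike.re (N s (ofRealC0 𝕜 (f * reC0 g'))) := h4
        _ ≤ RCLike.re (N s (ofRealC0 𝕜 (‖g‖ • f))) := h5
        _ = ‖g‖ * RCLike.re (N s Ff) := h6
        _ = RCLike.re (N s Ff) * ‖g‖ := mul_comm _ _
  -- lower bound: `‖Ff • s‖ ≤ re (N s Ff)`
  have hlower : ‖M.smul Ff s‖ ≤ RCLike.re (N s Ff) := by
    rw [← hnorm (M.smul Ff s)]
    apply ContinuousLinearMap.opNorm_le_bound _ hre_nonneg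
    intro g
    rw [hmod, habs]
    exact hbound g
  -- upper bound: `re (N s Ff) ≤ ‖Ff • s‖`
  have hupper : RCLike.re (N s Ff) ≤ ‖M.smul Ff s‖ := by
    apply le_of_forall_pos_le_add
    intro ε hε
    set δ : ℝ := ε / (‖s‖ + 1) with hδ
    have hδpos : 0 < δ := div_pos hε (by positivity)
    have hev : ∀ᶠ x in Filter.cocompact Ω, dist (f x) 0 < δ :=
      Metric.tendsto_nhds.mp f.zero_at_infty' δ hδpos
    obtain ⟨K, hK, hKsub⟩ := Filter.mem_cocompact.mp hev
    obtain ⟨e, he1, -, hesupp, he01⟩ :=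
      exists_continuous_one_zero_of_isCompact hK isClosed_empty (by simp)
    set E₀ : C₀(Ω, ℝ) := ⟨e, HasCompactSupport.is_zero_at_infty hesupp⟩ with hE₀
    set E : C₀(Ω, 𝕜) := ofRealC0 𝕜 E₀ with hE
    have hE1 : ‖E‖ ≤ 1 := by
      apply normC0_le_of _ _ zero_le_one
      intro x
      have hEx : E x = ((e x : ℝ) : 𝕜) := rfl
      rw [hEx, RCLike.norm_ofReal, abs_le]
      exact ⟨by linarith [(he01 x).1], (he01 x).2⟩
    have hdiff : ‖Ff - Ff * E‖ ≤ δ := by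
      apply normC0_le_of _ _ hδpos.le
      intro x
      have e1 : (Ff - Ff * E) x = (f x : 𝕜) - (f x : 𝕜) * (e x : 𝕜) := by
        have h1 : (Ff - Ff * E) x = Ff x - Ff x * E x := by simp
        have h2 : Ff x = (f x : 𝕜) := rfl
        have h3 : E x = ((e x : ℝ) : 𝕜) := rfl
        rw [h1, h2, h3]
      rw [e1]
      have e2 : (f x : 𝕜) - (f x : 𝕜) * (e x : 𝕜) = ((f x * (1 - e x) : ℝ) : 𝕜) := by
        push_cast; ring
      rw [e2, RCLike.norm_ofReal]
      by_cases hx : x ∈ K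
      · rw [show e x = 1 from he1 hx]
        simpa using hδpos.le
      · have hfx : |f x| < δ := by
          have := hKsub hx
          simpa [Real.dist_eq] using this
        have h1e : |1 - e x| ≤ 1 := by
          have hx01 := he01 x
          rw [abs_le]; constructor <;> [linarith [hx01.2]; linarith [hx01.1]]
        calc |f x * (1 - e x)| = |f x| * |1 - e x| := abs_mul _ _
          _ ≤ |f x| * 1 := mul_le_mul_of_nonneg_left h1e (abs_nonneg _)
          _ ≤ δ := by rw [mul_one]; exact hfx.le
    have hA : ‖N s Ff - N s (Ff * E)‖ ≤ ‖s‖ * δ := by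
      rw [← map_sub]
      calc ‖N s (Ff - Ff * E)‖ ≤ ‖N s‖ * ‖Ff - Ff * E‖ := (N s).le_opNorm _
        _ ≤ ‖s‖ * δ := by
            rw [hnorm]
            exact mul_le_mul_of_nonneg_left hdiff (norm_nonneg s)
    have hB : ‖N s (Ff * E)‖ ≤ ‖M.smul Ff s‖ := by
      have heq : N s (Ff * E) = N (M.smul Ff s) E := by rw [hmod, habs]
      rw [heq]
      calc ‖N (M.smul Ff s) E‖ ≤ ‖N (M.smul Ff s)‖ * ‖E‖ := (N _).le_opNorm _
        _ ≤ ‖M.smul Ff s‖ * 1 := by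
            rw [hnorm]
            exact mul_le_mul_of_nonneg_left hE1 (norm_nonneg _)
        _ = ‖M.smul Ff s‖ := mul_one _
    have hsδ : ‖s‖ * δ ≤ ε := by
      rw [hδ]
      calc ‖s‖ * (ε / (‖s‖ + 1)) ≤ (‖s‖ + 1) * (ε / (‖s‖ + 1)) :=
            mul_le_mul_of_nonneg_right (by linarith) hδpos.le
        _ = ε := by field_simp
    calc RCLike.re (N s Ff) ≤ ‖N s Ff‖ := RCLike.re_le_norm _
      _ ≤ ‖N s (Ff * E)‖ + ‖N s Ff - N s (Ff * E)‖ := by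
          have := norm_add_le (N s (Ff * E)) (N s Ff - N s (Ff * E))
          simpa using this
      _ ≤ ‖M.smul Ff s‖ + ‖s‖ * δ := add_le_add hB hA
      _ ≤ ‖M.smul Ff s‖ + ε := by linarith
  have hfinal : r0 = ‖M.smul Ff s‖ := by
    have hre : RCLike.re (N s Ff) = r0 := by rw [hψF, RCLike.ofReal_re]
    rw [← hre]
    exact le_antisymm hupper hlower
  exact hψF.trans (congrArg (fun r : ℝ => (r : 𝕜)) hfinal)

end
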